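/- The algebraic tensor product of two separated convex bornological vector spaces, equipped with the tensor product bornology (generated by convex hulls of images of products of bounded sets), is separated: its only bounded vector subspace is {0}. -/

import Mathlib

open scoped Pointwise

/-- A convex vector space bornology on a real vector space `V`. -/
structure VecBornology (V : Type*) [AddCommGroup V] [Module ℝ V] where
  IsBounded : Set V → Prop
  subset_mem : ∀ {A B : Set V}, A ⊆ B → IsBounded B → IsBounded A
  union_mem : ∀ {A B : Set V}, IsBounded A → IsBounded B → IsBounded (A ∪ B)
  singleton_mem : ∀ v : V, IsBounded {v}
  add_mem : ∀ {A B : Set V}, IsBounded A → IsBounded B → IsBounded (A + B)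
  smul_mem : ∀ (c : ℝ) {A : Set V}, IsBounded A → IsBounded (c • A)
  balancedHull_mem : ∀ {A : Set V}, IsBounded A → IsBounded (balancedHull ℝ A)
  convexHull_mem : ∀ {A : Set V}, IsBounded A → IsBounded (convexHull ℝ A)

/-- Mackey convergence of a sequence `u` to `v` with respect to a collection of
bounded sets: there is a bounded disk `D` such that for every `ε > 0` eventually
`u n - v ∈ ε • D`. -/
def MackeyConvTo {V : Type*} [AddCommGroup V] [Module ℝ V]
    (Bdd : Set V → Prop) (u : ℕ → V) (v : V) : Prop :=
  ∃ D : Set V, Bdd D ∧ Balanced ℝ D ∧ Convex ℝ D ∧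
    ∀ ε : ℝ, 0 < ε → ∃ N : ℕ, ∀ n ≥ N, u n - v ∈ ε • D

/-- Elements of the span of a convex balanced set containing 0 are in some dilate. -/
lemma mem_dilate_of_mem_span {V : Type*} [AddCommGroup V] [Module ℝ V] {D : Set V}
    (hc : Convex ℝ D) (hb : Balanced ℝ D) (h0 : (0:V) ∈ D) {v : V}
    (hv : v ∈ Submodule.span ℝ D) : ∃ r : ℝ, 0 < r ∧ v ∈ r • D := by
  let p : Submodule ℝ V :=
    { carrier := {u | ∃ r : ℝ, 0 < r ∧ u ∈ r • D}
      zero_mem' := ⟨1, one_pos, by rw [one_smul]; exact h0⟩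
      add_mem' := by
        rintro u w ⟨r, hr, hu⟩ ⟨s, hs, hw⟩
        exact ⟨r + s, by positivity, by
          rw [hc.add_smul hr.le hs.le]; exact Set.add_mem_add hu hw⟩
      smul_mem' := by
        rintro c u ⟨r, hr, hu⟩
        refine ⟨(|c| + 1) * r, by positivity, ?_⟩
        have h1 : c • u ∈ (c * r) • D := by
          rw [mul_smul]; exact Set.smul_mem_smul_set hu
        refine hb.smul_mono ?_ h1
        simp only [Real.norm_eq_abs, abs_mul]
        have h2 : |(|c| + 1)| = |c| + 1 := abs_of_nonneg (by positivity)
        rw [h2]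
        nlinarith [abs_nonneg c, abs_nonneg r, le_abs_self r, abs_of_nonneg hr.le]
      }
  have : Submodule.span ℝ D ≤ p :=
    Submodule.span_le.mpr (fun d hd => ⟨1, one_pos, by rw [one_smul]; exact hd⟩)
  exact this hv

/-- In a separated convex bornological space, for every bounded set `A` and nonzero `v`
there is a linear functional bounded by 1 on `A` and nonzero at `v`. -/
lemma exists_bounded_functional {V : Type*} [AddCommGroup V] [Module ℝ V]
    (βV : VecBornology V)
    (hV : ∀ p : Submodule ℝ V, βV.IsBounded (p : Set V) → p = ⊥)
    {A : Set V} (hA : βV.IsBounded A) {v : V} (hv : v ≠ 0) :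
    ∃ f : V →ₗ[ℝ] ℝ, f v ≠ 0 ∧ ∀ a ∈ A, |f a| ≤ 1 := by
  classical
  set D : Set V := convexHull ℝ (balancedHull ℝ (A ∪ {0})) with hDdef
  have hD : βV.IsBounded D :=
    βV.convexHull_mem (βV.balancedHull_mem (βV.union_mem hA (βV.singleton_mem 0)))
  have hDc : Convex ℝ D := convex_convexHull ℝ _
  have hDb : Balanced ℝ D := (balancedHull.balanced _).convexHull
  have h0 : (0:V) ∈ D :=
    subset_convexHull ℝ _ (subset_balancedHull ℝ (Set.mem_union_right _ rfl))
  have hAD : A ⊆ D := fun a ha =>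
    subset_convexHull ℝ _ (subset_balancedHull ℝ (Set.mem_union_left _ ha))
  set E : Submodule ℝ V := Submodule.span ℝ D with hEdef
  by_cases hvE : v ∈ E
  · -- Hahn–Banach case
    set sE : Set E := Subtype.val ⁻¹' D with hsEdef
    have hsc : Convex ℝ sE := hDc.linear_preimage E.subtype
    have hsb : Balanced ℝ sE := by
      intro a ha x hx
      obtain ⟨y, hy, rfl⟩ := hx
      show ((a • y : E) : V) ∈ D
      rw [Submodule.coe_smul]
      exact hDb.smul_mem ha hy
    have hmem_dilate : ∀ x : E, ∃ r : ℝ, 0 < r ∧ x ∈ r • sE := by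
      intro x
      obtain ⟨r, hr, hxr⟩ := mem_dilate_of_mem_span hDc hDb h0 x.2
      obtain ⟨d, hd, hdx⟩ := hxr
      have hdE : d ∈ E := Submodule.subset_span hd
      refine ⟨r, hr, ⟨⟨d, hdE⟩, hd, ?_⟩⟩
      exact Subtype.ext hdx
    have habs : Absorbent ℝ sE := by
      intro x
      obtain ⟨r, hr, hxr⟩ := hmem_dilate x
      refine Absorbs.of_norm ⟨r, fun c hc => Set.singleton_subset_iff.2 ?_⟩
      obtain ⟨d, hd, rfl⟩ := hxr
      have hc0 : c ≠ 0 := by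
        intro h; rw [h, norm_zero] at hc; exact absurd hc (not_le.2 hr)
      rw [Set.mem_smul_set_iff_inv_smul_mem₀ hc0]
      rw [smul_smul]
      have hcp : (0:ℝ) < ‖c‖ := lt_of_lt_of_le hr hc
      refine hsb.smul_mem ?_ hd
      rw [norm_mul, norm_inv, Real.norm_eq_abs r, abs_of_pos hr]
      calc ‖c‖⁻¹ * r ≤ ‖c‖⁻¹ * ‖c‖ := by gcongr
        _ = 1 := inv_mul_cancel₀ hcp.ne'
    set v' : E := ⟨v, hvE⟩ with hv'def
    have hv' : v' ≠ 0 := fun h => hv (congrArg Subtype.val h)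
    -- gauge positivity
    have hgpos : 0 < gauge sE v' := by
      rcases (gauge_nonneg v').lt_or_eq with h | h
      · exact h
      exfalso
      have hline : ∀ t : ℝ, t • v ∈ D := by
        intro t
        rcases eq_or_ne t 0 with rfl | ht
        · rw [zero_smul]; exact h0
        · have hS : {r : ℝ | 0 < r ∧ v' ∈ r • sE}.Nonempty := hmem_dilate v'
          have hlt : sInf {r : ℝ | 0 < r ∧ v' ∈ r • sE} < |t|⁻¹ := by
            rw [show sInf {r : ℝ | 0 < r ∧ v' ∈ r • sE} = gauge sE v' from rfl, ← h]
            exact inv_pos.2 (abs_pos.2 ht)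
          obtain ⟨r, ⟨hr, hvr⟩, hrt⟩ := exists_lt_of_csInf_lt hS hlt
          obtain ⟨d, hd, hdv⟩ := hvr
          have hvd : v = r • (d : V) := by
            have := congrArg Subtype.val hdv
            simpa using this.symm
          rw [hvd, smul_smul]
          refine hDb.smul_mem ?_ hd
          rw [Real.norm_eq_abs, abs_mul, abs_of_pos hr]
          have hlt1 : |t| * r < 1 := by
            calc |t| * r < |t| * |t|⁻¹ := mul_lt_mul_of_pos_left hrt (abs_pos.2 ht)
              _ = 1 := mul_inv_cancel₀ (abs_ne_zero.2 ht)
          exact hlt1.le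
      have hsub : ((Submodule.span ℝ {v} : Submodule ℝ V) : Set V) ⊆ D := by
        intro z hz
        obtain ⟨t, rfl⟩ := Submodule.mem_span_singleton.1 hz
        exact hline t
      have := hV _ (βV.subset_mem hsub hD)
      rw [Submodule.span_singleton_eq_bot] at this
      exact hv this
    -- Hahn–Banach extension
    set f₀ : E →ₗ.[ℝ] ℝ := LinearPMap.mkSpanSingleton v' (gauge sE v') hv' with hf₀
    have hf₀le : ∀ z : f₀.domain, f₀ z ≤ gauge sE z := by
      rintro ⟨z, hz⟩
      obtain ⟨c, rfl⟩ := Submodule.mem_span_singleton.1 hz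
      have : f₀ ⟨c • v', hz⟩ = c • gauge sE v' := LinearPMap.mkSpanSingleton'_apply _ _ _ c _
      rw [this]
      have hgsmul : gauge sE (c • v') = |c| * gauge sE v' := by
        simpa [Real.norm_eq_abs] using gauge_smul (s := sE) hsb c v'
      rw [hgsmul, smul_eq_mul]
      exact mul_le_mul_of_nonneg_right (le_abs_self c) (gauge_nonneg _)
    obtain ⟨g, hg_ext, hg_le⟩ := exists_extension_of_le_sublinear f₀ (gauge sE)
      (fun c hc x => by simpa [smul_eq_mul] using gauge_smul_of_nonneg hc.le x)
      (gauge_add_le hsc habs) hf₀le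
    have hgv : g v' = gauge sE v' := by
      have h1 := hg_ext ⟨v', Submodule.mem_span_singleton_self v'⟩
      rw [h1]
      exact LinearPMap.mkSpanSingleton_apply ℝ ℝ hv' _
    obtain ⟨q, hq⟩ := Submodule.exists_isCompl E
    set f : V →ₗ[ℝ] ℝ := g ∘ₗ (E.linearProjOfIsCompl q hq) with hfdef
    have hproj : ∀ x : E, E.linearProjOfIsCompl q hq (x : V) = x :=
      Submodule.linearProjOfIsCompl_apply_left hq
    refine ⟨f, ?_, ?_⟩
    · show g (E.linearProjOfIsCompl q hq (v' : V)) ≠ 0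
      rw [hproj v', hgv]
      exact ne_of_gt hgpos
    · intro a ha
      have haE : a ∈ E := Submodule.subset_span (hAD ha)
      have hbound : ∀ x : E, (x : V) ∈ D → g x ≤ 1 :=
        fun x hx => (hg_le x).trans (gauge_le_one_of_mem hx)
      have h1 : f a = g ⟨a, haE⟩ := by
        show g (E.linearProjOfIsCompl q hq (((⟨a, haE⟩ : E) : V))) = _
        rw [hproj]
      have hna : (-a) ∈ D := by
        have := hDb.smul_mem (a := (-1 : ℝ)) (by simp) (hAD ha)
        simpa using this
      rw [h1]
      refine abs_le.2 ⟨?_, hbound _ (hAD ha)⟩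
      have h2 : g (-(⟨a, haE⟩ : E)) ≤ 1 := hbound _ hna
      rw [map_neg] at h2
      linarith
  · -- v outside the span
    obtain ⟨f, hf1, hf2⟩ := Submodule.exists_dual_map_eq_bot_of_notMem hvE inferInstance
    refine ⟨f, hf1, fun a ha => ?_⟩
    have haE : a ∈ E := Submodule.subset_span (hAD ha)
    have : f a ∈ Submodule.map f E := ⟨a, haE, rfl⟩
    rw [hf2] at this
    rw [(Submodule.mem_bot ℝ).1 this]
    norm_num

open TensorProduct in
/-- The tensor product of two separated convex bornological vector spaces, with
the tensor product bornology, is separated: every vector subspace that is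
bounded (i.e. contained in the convex hull of the image of a product of bounded
sets under the canonical bilinear map) is zero. -/
theorem stmt_4 {V W : Type*} [AddCommGroup V] [Module ℝ V] [AddCommGroup W] [Module ℝ W]
    (βV : VecBornology V) (βW : VecBornology W)
    (hV : ∀ p : Submodule ℝ V, βV.IsBounded (p : Set V) → p = ⊥)
    (hW : ∀ p : Submodule ℝ W, βW.IsBounded (p : Set W) → p = ⊥) :
    ∀ p : Submodule ℝ (V ⊗[ℝ] W),
      (∃ (A : Set V) (B : Set W), βV.IsBounded A ∧ βW.IsBounded B ∧
        (p : Set (V ⊗[ℝ] W)) ⊆ convexHull ℝ (Set.image2 (fun v w => v ⊗ₜ[ℝ] w) A B)) →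
      p = ⊥ := by
  classical
  intro p hp
  obtain ⟨A, B, hA, hB, hsub⟩ := hp
  rw [Submodule.eq_bot_iff]
  intro x hxp
  by_contra hx0
  set S : Set (V ⊗[ℝ] W) := Set.image2 (fun v w => v ⊗ₜ[ℝ] w) A B with hSdef
  let b := Module.Basis.ofVectorSpace ℝ W
  let eq1 : V ⊗[ℝ] W ≃ₗ[ℝ] (Module.Basis.ofVectorSpaceIndex ℝ W →₀ V) :=
    (TensorProduct.congr (LinearEquiv.refl ℝ V) b.repr).trans
      (TensorProduct.finsuppScalarRight ℝ ℝ V _)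
  have h1 : eq1 x ≠ 0 := fun h => hx0 (by
    have := eq1.injective (h.trans (map_zero eq1).symm)
    exact this)
  obtain ⟨j₀, hj₀⟩ : ∃ j, eq1 x j ≠ 0 := by
    by_contra h
    push_neg at h
    exact h1 (Finsupp.ext h)
  obtain ⟨f, hfu, hfA⟩ := exists_bounded_functional βV hV hA hj₀
  set y : W := TensorProduct.lid ℝ W (LinearMap.rTensor W f x) with hydef
  set L₁ : V ⊗[ℝ] W →ₗ[ℝ] ℝ :=
    (Finsupp.lapply j₀) ∘ₗ (b.repr.toLinearMap) ∘ₗ (TensorProduct.lid ℝ W).toLinearMap ∘ₗ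
      (LinearMap.rTensor W f) with hL₁
  set L₂ : V ⊗[ℝ] W →ₗ[ℝ] ℝ := f ∘ₗ (Finsupp.lapply j₀) ∘ₗ eq1.toLinearMap with hL₂
  have hL : L₁ = L₂ := by
    apply TensorProduct.ext'
    intro v w
    simp [hL₁, hL₂, eq1, TensorProduct.finsuppScalarRight_apply_tmul_apply,
      TensorProduct.lid_tmul, mul_comm]
  have hkey : b.repr y j₀ = f (eq1 x j₀) := by
    have := LinearMap.congr_fun hL x
    simpa [hL₁, hL₂, hydef] using this
  have hy : y ≠ 0 := by
    intro h
    rw [h] at hkey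
    simp at hkey
    exact hfu hkey.symm
  obtain ⟨g, hgy, hgB⟩ := exists_bounded_functional βW hW hB hy
  set φ : V ⊗[ℝ] W →ₗ[ℝ] ℝ :=
    g ∘ₗ (TensorProduct.lid ℝ W).toLinearMap ∘ₗ (LinearMap.rTensor W f) with hφdef
  have hφx : φ x = g y := rfl
  have hφab : ∀ (a : V) (c : W), φ (a ⊗ₜ[ℝ] c) = f a * g c := by
    intro a c
    simp [hφdef, TensorProduct.lid_tmul, map_smul, smul_eq_mul]
  have hboundset : φ '' S ⊆ Set.Icc (-1 : ℝ) 1 := by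
    rintro _ ⟨z, hz, rfl⟩
    obtain ⟨a, ha, c, hc, rfl⟩ := hz
    rw [hφab]
    have habs : |f a * g c| ≤ 1 := by
      rw [abs_mul]
      exact mul_le_one₀ (hfA a ha) (abs_nonneg _) (hgB c hc)
    exact Set.mem_Icc.2 (abs_le.1 habs)
  have hmain : ∀ t : ℝ, |t * φ x| ≤ 1 := by
    intro t
    have htx : t • x ∈ convexHull ℝ S := hsub (p.smul_mem t hxp)
    have h2 : φ (t • x) ∈ φ '' (convexHull ℝ S) := Set.mem_image_of_mem _ htx
    rw [φ.image_convexHull] at h2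
    have h3 := convexHull_min hboundset (convex_Icc _ _) h2
    rw [map_smul, smul_eq_mul] at h3
    exact abs_le.2 (Set.mem_Icc.1 h3)
  have hφx0 : φ x ≠ 0 := by rw [hφx]; exact hgy
  have h4 := hmain (2 / φ x)
  rw [div_mul_cancel₀ 2 hφx0] at h4
  norm_num at h4
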